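/- Every domino tiling of the 6×6 chessboard has a fault line: a horizontal or vertical line through the interior of the board that does not cut through any domino. -/

import Mathlib

/-- Two cells of an `m × n` board are edge-adjacent. -/
def DominoAdj {m n : ℕ} (a b : Fin m × Fin n) : Prop :=
  ((a.1 : ℕ) = b.1 ∧ ((a.2 : ℕ) + 1 = b.2 ∨ (b.2 : ℕ) + 1 = a.2)) ∨
  ((a.2 : ℕ) = b.2 ∧ ((a.1 : ℕ) + 1 = b.1 ∨ (b.1 : ℕ) + 1 = a.1))

instance {m n : ℕ} (a b : Fin m × Fin n) : Decidable (DominoAdj a b) := by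
  unfold DominoAdj; infer_instance

/-- A domino tiling of the `m × n` board, encoded as a fixed-point-free involution
pairing each cell with the edge-adjacent cell covered by the same domino. -/
def IsDominoTiling {m n : ℕ} (f : Fin m × Fin n → Fin m × Fin n) : Prop :=
  ∀ c, f (f c) = c ∧ DominoAdj c (f c)

instance {m n : ℕ} : DecidablePred (@IsDominoTiling m n) := fun f => by
  unfold IsDominoTiling; infer_instance

/-- The number of domino tilings of the `m × n` board. -/
def numDominoTilings (m n : ℕ) : ℕ :=
  Fintype.card {f : Fin m × Fin n → Fin m × Fin n // IsDominoTiling f}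

open Finset

private lemma even_card_invol {α : Type*} [DecidableEq α] (g : α → α) (s : Finset α)
    (h1 : ∀ a ∈ s, g a ∈ s) (h2 : ∀ a ∈ s, g (g a) = a) (h3 : ∀ a ∈ s, g a ≠ a) :
    Even s.card := by
  induction s using Finset.strongInduction with
  | _ s ih =>
    rcases s.eq_empty_or_nonempty with rfl | ⟨a, ha⟩
    · simp
    · have hga := h1 a ha
      have hne : a ≠ g a := (h3 a ha).symm
      have hgga := h2 a ha
      have hsub : ({a, g a} : Finset α) ⊆ s := by
        intro x hx
        simp only [mem_insert, mem_singleton] at hx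
        rcases hx with rfl | rfl
        · exact ha
        · exact hga
      have hts : s \ {a, g a} ⊂ s := by
        refine ⟨sdiff_subset, fun hcon => ?_⟩
        have : a ∈ s \ {a, g a} := hcon ha
        simp at this
      have hmem : ∀ b ∈ s \ {a, g a}, b ∈ s ∧ b ≠ a ∧ b ≠ g a := by
        intro b hb
        simp only [mem_sdiff, mem_insert, mem_singleton] at hb
        tauto
      have hEt : Even (s \ {a, g a}).card := by
        refine ih _ hts ?_ ?_ ?_
        · intro b hb
          obtain ⟨hbs, hba, hbga⟩ := hmem b hb
          simp only [mem_sdiff, mem_insert, mem_singleton, not_or]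
          refine ⟨h1 b hbs, ?_, ?_⟩
          · intro hcon
            exact hbga (by rw [← h2 b hbs, hcon])
          · intro hcon
            exact hba (by rw [← h2 b hbs, hcon, hgga])
        · intro b hb; exact h2 b (hmem b hb).1
        · intro b hb; exact h3 b (hmem b hb).1
      have hcard : (s \ {a, g a}).card = s.card - 2 := by
        rw [card_sdiff_of_subset hsub, card_pair hne]
      have hle : 2 ≤ s.card := by
        have := card_le_card hsub
        rwa [card_pair hne] at this
      obtain ⟨m, hm⟩ := hEt
      rw [Nat.even_iff]
      omega

private lemma crossings_lower (f : Fin 6 × Fin 6 → Fin 6 × Fin 6) (hf : IsDominoTiling f)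
    (hno : ∀ k : ℕ, 1 ≤ k → k ≤ 5 → ∃ c : Fin 6 × Fin 6, (c.1 : ℕ) < k ∧ k ≤ ((f c).1 : ℕ)) :
    10 ≤ (univ.filter fun c : Fin 6 × Fin 6 => (c.1 : ℕ) + 1 = ((f c).1 : ℕ)).card := by
  have hinv : ∀ c, f (f c) = c := fun c => (hf c).1
  have hadj : ∀ c, DominoAdj c (f c) := fun c => (hf c).2
  have hSk : ∀ k : ℕ, k < 5 →
      2 ≤ (univ.filter fun c : Fin 6 × Fin 6 =>
            (c.1 : ℕ) = k ∧ ((f c).1 : ℕ) = k + 1).card := by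
    intro k hk
    obtain ⟨c, hc1, hc2⟩ := hno (k + 1) (by omega) (by omega)
    have hcS : c ∈ univ.filter fun c : Fin 6 × Fin 6 =>
        (c.1 : ℕ) = k ∧ ((f c).1 : ℕ) = k + 1 := by
      have hA := hadj c
      unfold DominoAdj at hA
      simp only [mem_filter, mem_univ, true_and]
      omega
    have hpos : 1 ≤ (univ.filter fun c : Fin 6 × Fin 6 =>
        (c.1 : ℕ) = k ∧ ((f c).1 : ℕ) = k + 1).card :=
      card_pos.mpr ⟨c, hcS⟩
    have hEvenB : Even ((univ.filter fun c : Fin 6 × Fin 6 => (c.1 : ℕ) ≤ k).filter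
        fun c => ((f c).1 : ℕ) ≤ k).card := by
      apply even_card_invol f
      · intro a haB
        simp only [mem_filter, mem_univ, true_and] at haB ⊢
        rw [hinv a]
        exact ⟨haB.2, haB.1⟩
      · intro a _; exact hinv a
      · intro a _ hcon
        have hA := hadj a
        rw [hcon] at hA
        unfold DominoAdj at hA
        omega
    have hsplit := Finset.card_filter_add_card_filter_not
      (s := univ.filter fun c : Fin 6 × Fin 6 => (c.1 : ℕ) ≤ k)
      (p := fun c => ((f c).1 : ℕ) ≤ k)
    have hSeq : ((univ.filter fun c : Fin 6 × Fin 6 => (c.1 : ℕ) ≤ k).filter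
        fun c => ¬ ((f c).1 : ℕ) ≤ k)
        = univ.filter fun c : Fin 6 × Fin 6 => (c.1 : ℕ) = k ∧ ((f c).1 : ℕ) = k + 1 := by
      rw [Finset.filter_filter]
      apply Finset.filter_congr
      intro c _
      have hA := hadj c
      unfold DominoAdj at hA
      constructor
      · intro h; omega
      · intro h; omega
    have hAcard : (univ.filter fun c : Fin 6 × Fin 6 => (c.1 : ℕ) ≤ k).card = 6 * (k + 1) := by
      interval_cases k <;> decide
    rw [hSeq, hAcard] at hsplit
    obtain ⟨m, hm⟩ := hEvenB
    omega
  have hV : (univ.filter fun c : Fin 6 × Fin 6 => (c.1 : ℕ) + 1 = ((f c).1 : ℕ)).card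
      = ∑ k ∈ Finset.range 5,
        ((univ.filter fun c : Fin 6 × Fin 6 => (c.1 : ℕ) + 1 = ((f c).1 : ℕ)).filter
          fun c => (c.1 : ℕ) = k).card := by
    apply Finset.card_eq_sum_card_fiberwise
    intro c hc
    simp only [coe_filter, Set.mem_setOf_eq, mem_coe, mem_filter, mem_univ, true_and] at hc
    rw [Finset.mem_coe, Finset.mem_range]; beta_reduce
    have := ((f c).1).isLt
    omega
  rw [hV]
  calc (10 : ℕ) = ∑ _k ∈ Finset.range 5, 2 := by simp
  _ ≤ _ := by
      apply Finset.sum_le_sum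
      intro k hk
      rw [Finset.mem_range] at hk
      have heq : ((univ.filter fun c : Fin 6 × Fin 6 =>
          (c.1 : ℕ) + 1 = ((f c).1 : ℕ)).filter fun c => (c.1 : ℕ) = k)
          = univ.filter fun c : Fin 6 × Fin 6 => (c.1 : ℕ) = k ∧ ((f c).1 : ℕ) = k + 1 := by
        rw [Finset.filter_filter]
        apply Finset.filter_congr
        intro c _
        constructor
        · intro h; omega
        · intro h; omega
      rw [heq]
      exact hSk k hk

private lemma total_crossings (f : Fin 6 × Fin 6 → Fin 6 × Fin 6) (hf : IsDominoTiling f) :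
    (univ.filter fun c : Fin 6 × Fin 6 => (c.1 : ℕ) + 1 = ((f c).1 : ℕ)).card
    + (univ.filter fun c : Fin 6 × Fin 6 => (c.2 : ℕ) + 1 = ((f c).2 : ℕ)).card = 18 := by
  have hinv : ∀ c, f (f c) = c := fun c => (hf c).1
  have hadj : ∀ c, DominoAdj c (f c) := fun c => (hf c).2
  have hdisj : Disjoint (univ.filter fun c : Fin 6 × Fin 6 => (c.1 : ℕ) + 1 = ((f c).1 : ℕ))
      (univ.filter fun c : Fin 6 × Fin 6 => (c.2 : ℕ) + 1 = ((f c).2 : ℕ)) := by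
    rw [Finset.disjoint_left]
    intro c h1 h2
    simp only [mem_filter, mem_univ, true_and] at h1 h2
    have hA := hadj c
    unfold DominoAdj at hA
    omega
  have hunion : (univ.filter fun c : Fin 6 × Fin 6 => (c.1 : ℕ) + 1 = ((f c).1 : ℕ))
      ∪ (univ.filter fun c : Fin 6 × Fin 6 => (c.2 : ℕ) + 1 = ((f c).2 : ℕ))
      = univ.filter fun c : Fin 6 × Fin 6 =>
          ((c.1 : ℕ) + 1 = ((f c).1 : ℕ) ∨ (c.2 : ℕ) + 1 = ((f c).2 : ℕ)) := by
    rw [← Finset.filter_or]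
  have hWmem : ∀ c : Fin 6 × Fin 6,
      (((c.1 : ℕ) + 1 = ((f c).1 : ℕ) ∨ (c.2 : ℕ) + 1 = ((f c).2 : ℕ))) ↔
      ¬ ((((f c).1 : ℕ) + 1 = ((f (f c)).1 : ℕ) ∨ ((f c).2 : ℕ) + 1 = ((f (f c)).2 : ℕ))) := by
    intro c
    rw [hinv c]
    have hA := hadj c
    unfold DominoAdj at hA
    omega
  have hbij : (univ.filter fun c : Fin 6 × Fin 6 =>
        ((c.1 : ℕ) + 1 = ((f c).1 : ℕ) ∨ (c.2 : ℕ) + 1 = ((f c).2 : ℕ))).card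
      = (univ.filter fun c : Fin 6 × Fin 6 =>
        ¬ ((c.1 : ℕ) + 1 = ((f c).1 : ℕ) ∨ (c.2 : ℕ) + 1 = ((f c).2 : ℕ))).card := by
    apply Finset.card_bij (fun c _ => f c)
    · intro a ha
      simp only [mem_filter, mem_univ, true_and] at ha ⊢
      exact (hWmem a).mp ha
    · intro a _ b _ hab
      have := congrArg f hab
      rwa [hinv a, hinv b] at this
    · intro b hb
      simp only [mem_filter, mem_univ, true_and] at hb
      refine ⟨f b, ?_, hinv b⟩
      simp only [mem_filter, mem_univ, true_and]
      rw [hWmem (f b), hinv b]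
      exact hb
  have hsplit := Finset.card_filter_add_card_filter_not
    (s := (univ : Finset (Fin 6 × Fin 6)))
    (p := fun c => ((c.1 : ℕ) + 1 = ((f c).1 : ℕ) ∨ (c.2 : ℕ) + 1 = ((f c).2 : ℕ)))
  have hunivcard : (univ : Finset (Fin 6 × Fin 6)).card = 36 := by decide
  rw [hunivcard] at hsplit
  have hcardsum := Finset.card_union_of_disjoint hdisj
  rw [hunion] at hcardsum
  omega

/-- Every domino tiling of the 6×6 board has a fault line: a horizontal or vertical
grid line at distance `k` (1 ≤ k ≤ 5) from an edge that no domino straddles. -/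
theorem six_six_fault_line (f : Fin 6 × Fin 6 → Fin 6 × Fin 6)
    (hf : IsDominoTiling f) :
    ∃ k : ℕ, 1 ≤ k ∧ k ≤ 5 ∧
      ((∀ c : Fin 6 × Fin 6, (c.1 : ℕ) < k → ((f c).1 : ℕ) < k) ∨
       (∀ c : Fin 6 × Fin 6, (c.2 : ℕ) < k → ((f c).2 : ℕ) < k)) := by
  by_contra hcon
  push_neg at hcon
  set g : Fin 6 × Fin 6 → Fin 6 × Fin 6 := fun c => Prod.swap (f (Prod.swap c)) with hgdef
  have hg : IsDominoTiling g := by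
    intro c
    constructor
    · show Prod.swap (f (Prod.swap (Prod.swap (f (Prod.swap c))))) = c
      rw [Prod.swap_swap, (hf _).1, Prod.swap_swap]
    · have hA := (hf (Prod.swap c)).2
      unfold DominoAdj at hA ⊢
      simp only [hgdef, Prod.fst_swap, Prod.snd_swap] at hA ⊢
      tauto
  have hr := crossings_lower f hf (fun k h1 h5 => (hcon k h1 h5).1)
  have hc : 10 ≤ (univ.filter fun c : Fin 6 × Fin 6 => (c.1 : ℕ) + 1 = ((g c).1 : ℕ)).card := by
    apply crossings_lower g hg
    intro k h1 h5
    obtain ⟨c, hc1, hc2⟩ := (hcon k h1 h5).2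
    refine ⟨Prod.swap c, ?_, ?_⟩
    · simpa using hc1
    · simpa [hgdef] using hc2
  have hswap : (univ.filter fun c : Fin 6 × Fin 6 => (c.1 : ℕ) + 1 = ((g c).1 : ℕ)).card
      = (univ.filter fun c : Fin 6 × Fin 6 => (c.2 : ℕ) + 1 = ((f c).2 : ℕ)).card := by
    apply Finset.card_bij (fun c _ => Prod.swap c)
    · intro a ha
      simp only [mem_filter, mem_univ, true_and, hgdef, Prod.fst_swap, Prod.snd_swap] at ha ⊢
      simpa using ha
    · intro a _ b _ hab
      exact Prod.swap_injective hab
    · intro b hb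
      simp only [mem_filter, mem_univ, true_and] at hb
      refine ⟨Prod.swap b, ?_, Prod.swap_swap b⟩
      simp only [mem_filter, mem_univ, true_and, hgdef, Prod.fst_swap, Prod.snd_swap,
        Prod.swap_swap]
      exact hb
  have htot := total_crossings f hf
  omega
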